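/- Let φ ∈ (−π,π) with φ ≠ 0 and let k be a positive integer. Then exp_m⁻¹(G_{2k}(φ·I_k)) = { M · Ω_{2k}(φ·I_k, K) · Mᵀ : K ∈ ℤ^{k×k} diagonal, M ∈ ℝ^{2k×2k} J_{2k}-orthosymplectic }; that is, a skew-symmetric 2k×2k matrix Ω satisfies exp_m(Ω) = cos(φ)·I_{2k} + sin(φ)·J_{2k} if and only if Ω = M·Ω_{2k}(φ·I_k,K)·Mᵀ for some diagonal integer matrix K and some J_{2k}-orthosymplectic M. -/

import Mathlib

open Matrix

/-- The matrix exponential of a real square matrix. -/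
noncomputable def mexp {N : Type*} [Fintype N] [DecidableEq N] (M : Matrix N N ℝ) :
    Matrix N N ℝ :=
  NormedSpace.exp M

/-- `G_p(Φ)`: the `p×p` block-diagonal rotation matrix whose j-th 2×2 diagonal block is the
rotation by the j-th diagonal entry of the diagonal matrix `Φ` (represented by the vector of
its diagonal entries); if `p` is odd, an extra diagonal entry `1` is appended. -/
noncomputable def Gmat (p : ℕ) (Φ : Fin (p / 2) → ℝ) : Matrix (Fin p) (Fin p) ℝ :=
  Matrix.of fun i j =>
    if h : i.val / 2 = j.val / 2 ∧ i.val / 2 < p / 2 then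
      if i.val % 2 = 0 then
        if j.val % 2 = 0 then Real.cos (Φ ⟨i.val / 2, h.2⟩) else -Real.sin (Φ ⟨i.val / 2, h.2⟩)
      else
        if j.val % 2 = 0 then Real.sin (Φ ⟨i.val / 2, h.2⟩) else Real.cos (Φ ⟨i.val / 2, h.2⟩)
    else if i = j then 1 else 0

/-- `Ω_p(Φ, K)`: the `p×p` block-diagonal skew-symmetric matrix whose j-th 2×2 diagonal block is
`(Φ_jj + 2π K_jj) · J₂` where `J₂ = [[0,-1],[1,0]]`; if `p` is odd, an extra diagonal entry `0`
is appended. -/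
noncomputable def Omat (p : ℕ) (Φ : Fin (p / 2) → ℝ) (K : Fin (p / 2) → ℤ) :
    Matrix (Fin p) (Fin p) ℝ :=
  Matrix.of fun i j =>
    if h : i.val / 2 = j.val / 2 ∧ i.val / 2 < p / 2 then
      if i.val % 2 = 0 ∧ j.val % 2 = 1 then
        -(Φ ⟨i.val / 2, h.2⟩ + 2 * Real.pi * (K ⟨i.val / 2, h.2⟩ : ℝ))
      else if i.val % 2 = 1 ∧ j.val % 2 = 0 then
        Φ ⟨i.val / 2, h.2⟩ + 2 * Real.pi * (K ⟨i.val / 2, h.2⟩ : ℝ)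
      else 0
    else 0

/-- `J_{2m}`: the `2m×2m` block-diagonal matrix with `m` copies of `J₂ = [[0,-1],[1,0]]` on the
diagonal. -/
noncomputable def Jmat (m : ℕ) : Matrix (Fin (2 * m)) (Fin (2 * m)) ℝ :=
  Matrix.of fun i j =>
    if i.val = j.val + 1 ∧ j.val % 2 = 0 then 1
    else if j.val = i.val + 1 ∧ i.val % 2 = 0 then -1
    else 0

namespace ExpmAux


/-- block entry selector -/
def g (z : ℂ) (b c : ℕ) : ℝ :=
  if b % 2 = 0 then (if c % 2 = 0 then z.re else -z.im)
  else (if c % 2 = 0 then z.im else z.re)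

lemma g_mod (z : ℂ) (b c : ℕ) : g z b c = g z (b % 2) (c % 2) := by
  unfold g
  rcases Nat.mod_two_eq_zero_or_one b with hb | hb <;>
    rcases Nat.mod_two_eq_zero_or_one c with hc | hc <;> simp [hb, hc]

lemma g_add (z w : ℂ) (b c : ℕ) : g (z + w) b c = g z b c + g w b c := by
  unfold g; split_ifs <;> simp <;> ring

lemma g_conj (z : ℂ) (b c : ℕ) : g ((starRingEnd ℂ) z) b c = g z c b := by
  unfold g; split_ifs <;> simp

/-- realification of a complex k×k matrix into a 2k×2k real matrix -/
def cmx (k : ℕ) (A : Matrix (Fin k) (Fin k) ℂ) : Matrix (Fin (2 * k)) (Fin (2 * k)) ℝ :=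
  Matrix.of fun i j =>
    g (A ⟨i.val / 2, by have := i.isLt; omega⟩ ⟨j.val / 2, by have := j.isLt; omega⟩) i.val j.val

lemma cmx_apply {k : ℕ} (A : Matrix (Fin k) (Fin k) ℂ) (i j : Fin (2 * k)) :
    cmx k A i j =
      g (A ⟨i.val / 2, by have := i.isLt; omega⟩ ⟨j.val / 2, by have := j.isLt; omega⟩)
        i.val j.val := rfl

lemma cmx_apply' {k : ℕ} (A : Matrix (Fin k) (Fin k) ℂ) (i j : Fin (2 * k))
    (a c : Fin k) (b d : ℕ) (hb : b < 2) (hd : d < 2)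
    (hi : i.val = 2 * a.val + b) (hj : j.val = 2 * c.val + d) :
    cmx k A i j = g (A a c) b d := by
  have e1 : (⟨i.val / 2, by have := i.isLt; omega⟩ : Fin k) = a :=
    Fin.ext (show i.val / 2 = a.val by omega)
  have e2 : (⟨j.val / 2, by have := j.isLt; omega⟩ : Fin k) = c :=
    Fin.ext (show j.val / 2 = c.val by omega)
  rw [cmx_apply, e1, e2, g_mod, show i.val % 2 = b % 2 by omega,
    show j.val % 2 = d % 2 by omega, ← g_mod]

/-- the pairing equivalence -/
def pe (k : ℕ) : Fin k × Fin 2 ≃ Fin (2 * k) where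
  toFun p := ⟨2 * p.1.val + p.2.val, by have := p.1.isLt; have := p.2.isLt; omega⟩
  invFun i := (⟨i.val / 2, by have := i.isLt; omega⟩, ⟨i.val % 2, by omega⟩)
  left_inv := by
    rintro ⟨a, b⟩
    have := b.isLt
    refine Prod.ext (Fin.ext ?_) (Fin.ext ?_) <;> simp <;> omega
  right_inv i := by
    apply Fin.ext; simp; omega

lemma pe_val {k : ℕ} (a : Fin k) (b : Fin 2) : (pe k (a, b)).val = 2 * a.val + b.val := rfl

lemma cmx_pe_pe {k : ℕ} (A : Matrix (Fin k) (Fin k) ℂ) (a c : Fin k) (b d : Fin 2) :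
    cmx k A (pe k (a, b)) (pe k (c, d)) = g (A a c) b.val d.val :=
  cmx_apply' A _ _ a c b.val d.val b.isLt d.isLt rfl rfl

lemma cmx_add {k : ℕ} (A B : Matrix (Fin k) (Fin k) ℂ) :
    cmx k (A + B) = cmx k A + cmx k B := by
  ext i j
  simp [cmx_apply, g_add, Matrix.add_apply]

lemma cmx_one {k : ℕ} : cmx k (1 : Matrix (Fin k) (Fin k) ℂ) = 1 := by
  ext i j
  have hi := i.isLt; have hj := j.isLt
  rw [cmx_apply, Matrix.one_apply, Matrix.one_apply]
  by_cases hij : i = j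
  · subst hij
    simp only [if_pos rfl, if_pos rfl]
    unfold g
    rcases Nat.mod_two_eq_zero_or_one i.val with hb | hb <;> simp [hb]
  · rw [if_neg hij]
    by_cases hblk : (⟨i.val / 2, by omega⟩ : Fin k) = (⟨j.val / 2, by omega⟩ : Fin k)
    · rw [if_pos hblk]
      have hb : i.val / 2 = j.val / 2 := by simpa [Fin.ext_iff] using hblk
      have hv : i.val ≠ j.val := fun h => hij (Fin.ext h)
      unfold g
      rcases Nat.mod_two_eq_zero_or_one i.val with h1 | h1 <;>
        rcases Nat.mod_two_eq_zero_or_one j.val with h2 | h2 <;>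
        simp [h1, h2] <;> omega
    · rw [if_neg hblk]
      unfold g; split_ifs <;> simp

lemma cmx_zero {k : ℕ} : cmx k (0 : Matrix (Fin k) (Fin k) ℂ) = 0 := by
  ext i j
  simp only [cmx_apply, Matrix.zero_apply]
  unfold g; split_ifs <;> simp

lemma cmx_mul {k : ℕ} (A B : Matrix (Fin k) (Fin k) ℂ) :
    cmx k (A * B) = cmx k A * cmx k B := by
  ext i j
  have hi := i.isLt; have hj := j.isLt
  rw [Matrix.mul_apply, ← Equiv.sum_comp (pe k) (fun l => cmx k A i l * cmx k B l j),
    Fintype.sum_prod_type]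
  simp only [Fin.sum_univ_two]
  have hrow : ∀ (a : Fin k) (b : Fin 2),
      cmx k A i (pe k (a, b)) = g (A ⟨i.val / 2, by omega⟩ a) (i.val % 2) b.val := fun a b =>
    cmx_apply' A i (pe k (a, b)) ⟨i.val / 2, by omega⟩ a (i.val % 2) b.val (by omega) b.isLt
      (by show i.val = 2 * (i.val / 2) + i.val % 2; omega) rfl
  have hcol : ∀ (a : Fin k) (b : Fin 2),
      cmx k B (pe k (a, b)) j = g (B a ⟨j.val / 2, by omega⟩) b.val (j.val % 2) := fun a b =>
    cmx_apply' B (pe k (a, b)) j a ⟨j.val / 2, by omega⟩ b.val (j.val % 2) b.isLt (by omega)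
      rfl (by show j.val = 2 * (j.val / 2) + j.val % 2; omega)
  simp only [hrow, hcol, Fin.val_zero, Fin.val_one]
  rw [cmx_apply, Matrix.mul_apply, g_mod]
  have key : ∀ (z : Fin k → ℂ), g (∑ a, z a) (i.val % 2) (j.val % 2) = ∑ a, g (z a) (i.val % 2) (j.val % 2) := by
    intro z; unfold g; split_ifs <;> simp
  rw [key]
  refine Finset.sum_congr rfl fun a _ => ?_
  rcases Nat.mod_two_eq_zero_or_one i.val with h1 | h1 <;>
    rcases Nat.mod_two_eq_zero_or_one j.val with h2 | h2 <;>
      simp [g, h1, h2, Complex.mul_re, Complex.mul_im] <;> ring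


lemma cmx_conjTranspose {k : ℕ} (A : Matrix (Fin k) (Fin k) ℂ) :
    cmx k Aᴴ = (cmx k A)ᵀ := by
  ext i j
  rw [Matrix.transpose_apply, cmx_apply, cmx_apply, Matrix.conjTranspose_apply]
  exact g_conj _ _ _

lemma cmx_injective {k : ℕ} : Function.Injective (cmx k) := by
  intro A B h
  ext a c
  have h0 := congrFun (congrFun h (pe k (a, 0))) (pe k (c, 0))
  have h1 := congrFun (congrFun h (pe k (a, 1))) (pe k (c, 0))
  rw [cmx_pe_pe, cmx_pe_pe] at h0 h1
  simp only [g, Fin.val_zero, Fin.val_one] at h0 h1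
  norm_num at h0 h1
  exact Complex.ext h0 h1

/-- `cmx` as a ring homomorphism. -/
def cmxHom (k : ℕ) : Matrix (Fin k) (Fin k) ℂ →+* Matrix (Fin (2 * k)) (Fin (2 * k)) ℝ where
  toFun := cmx k
  map_one' := cmx_one
  map_mul' := cmx_mul
  map_zero' := cmx_zero
  map_add' := cmx_add

lemma g_continuous (b c : ℕ) : Continuous fun z => g z b c := by
  unfold g
  split_ifs
  · exact Complex.continuous_re
  · exact Complex.continuous_im.neg
  · exact Complex.continuous_im
  · exact Complex.continuous_re

lemma cmx_continuous (k : ℕ) : Continuous (cmx k) := by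
  apply continuous_matrix
  intro i j
  exact (g_continuous i.val j.val).comp ((continuous_apply _).comp (continuous_apply _))

lemma cmx_exp {k : ℕ} (A : Matrix (Fin k) (Fin k) ℂ) :
    cmx k (NormedSpace.exp A) = NormedSpace.exp (cmx k A) := by
  letI : SeminormedRing (Matrix (Fin k) (Fin k) ℂ) := Matrix.linftyOpSemiNormedRing
  letI : NormedRing (Matrix (Fin k) (Fin k) ℂ) := Matrix.linftyOpNormedRing
  letI : NormedAlgebra ℝ (Matrix (Fin k) (Fin k) ℂ) := Matrix.linftyOpNormedAlgebra
  letI : NormedAlgebra ℚ (Matrix (Fin k) (Fin k) ℂ) := NormedAlgebra.restrictScalars ℚ ℝ _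
  letI : SeminormedRing (Matrix (Fin (2 * k)) (Fin (2 * k)) ℝ) := Matrix.linftyOpSemiNormedRing
  letI : NormedRing (Matrix (Fin (2 * k)) (Fin (2 * k)) ℝ) := Matrix.linftyOpNormedRing
  letI : NormedAlgebra ℝ (Matrix (Fin (2 * k)) (Fin (2 * k)) ℝ) := Matrix.linftyOpNormedAlgebra
  exact NormedSpace.map_exp (cmxHom k) (cmx_continuous k) A


lemma g_zero (b c : ℕ) : g 0 b c = 0 := by
  unfold g; split_ifs <;> simp

lemma cmx_smul_one_apply {k : ℕ} (z : ℂ) (i j : Fin (2 * k)) :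
    cmx k (z • (1 : Matrix (Fin k) (Fin k) ℂ)) i j =
      if i.val / 2 = j.val / 2 then g z i.val j.val else 0 := by
  rw [cmx_apply]
  by_cases h : i.val / 2 = j.val / 2
  · rw [if_pos h]
    congr 1
    rw [Matrix.smul_apply, Matrix.one_apply, if_pos (Fin.ext h)]
    simp
  · rw [if_neg h, Matrix.smul_apply, Matrix.one_apply, if_neg, smul_zero]
    · exact g_zero _ _
    · intro hc; exact h (by simpa [Fin.ext_iff] using hc)

lemma Jmat_eq (k : ℕ) : Jmat k = cmx k (Complex.I • 1) := by
  ext i j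
  have hi := i.isLt; have hj := j.isLt
  rw [cmx_smul_one_apply]
  simp only [Jmat, Matrix.of_apply]
  by_cases hb : i.val / 2 = j.val / 2
  · rw [if_pos hb]
    rcases Nat.mod_two_eq_zero_or_one i.val with h1 | h1 <;>
      rcases Nat.mod_two_eq_zero_or_one j.val with h2 | h2 <;>
        simp only [g, h1, h2, Complex.I_re, Complex.I_im] <;> split_ifs <;>
          first | rfl | (exfalso; omega) | (simp_all <;> omega)
  · rw [if_neg hb]
    split_ifs <;> first | rfl | (exfalso; omega)

lemma Gmat_eq (k : ℕ) (φ : ℝ) :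
    Gmat (2 * k) (fun _ => φ) = cmx k (Complex.exp (φ * Complex.I) • 1) := by
  ext i j
  have hi := i.isLt; have hj := j.isLt
  rw [cmx_smul_one_apply]
  simp only [Gmat, Matrix.of_apply]
  by_cases hb : i.val / 2 = j.val / 2
  · rw [if_pos hb, dif_pos ⟨hb, by omega⟩]
    rcases Nat.mod_two_eq_zero_or_one i.val with h1 | h1 <;>
      rcases Nat.mod_two_eq_zero_or_one j.val with h2 | h2 <;>
        simp only [g, h1, h2, Complex.add_re, Complex.add_im, Complex.exp_mul_I,
          Complex.mul_re, Complex.mul_im, Complex.I_re, Complex.I_im,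
          Complex.cos_ofReal_re, Complex.sin_ofReal_re, Complex.cos_ofReal_im,
          Complex.sin_ofReal_im] <;> split_ifs <;> first | ring | (exfalso; omega) | simp_all
  · rw [if_neg hb, dif_neg (by omega : ¬(i.val / 2 = j.val / 2 ∧ i.val / 2 < 2 * k / 2)),
      if_neg (fun hij : i = j => hb (by rw [hij]))]

lemma Omat_eq (k : ℕ) (φ : ℝ) (K : Fin (2 * k / 2) → ℤ) :
    Omat (2 * k) (fun _ => φ) K =
      cmx k (Matrix.diagonal fun a : Fin k =>
        ((φ + 2 * Real.pi * (K ⟨a.val, by have := a.isLt; omega⟩ : ℝ) : ℝ) : ℂ) *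
          Complex.I) := by
  ext i j
  have hi := i.isLt; have hj := j.isLt
  rw [cmx_apply]
  simp only [Omat, Matrix.of_apply, Matrix.diagonal_apply]
  by_cases hb : i.val / 2 = j.val / 2
  · rw [dif_pos ⟨hb, by omega⟩,
      if_pos (Fin.ext (show i.val / 2 = j.val / 2 from hb) :
        (⟨i.val / 2, by omega⟩ : Fin k) = ⟨j.val / 2, by omega⟩)]
    have hK : (K ⟨i.val / 2, by omega⟩ : ℝ) =
        (K ⟨(⟨i.val / 2, by omega⟩ : Fin k).val, by omega⟩ : ℝ) := rfl
    rcases Nat.mod_two_eq_zero_or_one i.val with h1 | h1 <;>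
      rcases Nat.mod_two_eq_zero_or_one j.val with h2 | h2 <;>
        simp [g, h1, h2] <;> norm_num [hK]
  · rw [dif_neg (by omega : ¬(i.val / 2 = j.val / 2 ∧ i.val / 2 < 2 * k / 2)),
      if_neg (fun hc : (⟨i.val / 2, by omega⟩ : Fin k) = ⟨j.val / 2, by omega⟩ =>
        hb (by simpa [Fin.ext_iff] using hc)), g_zero]

lemma g_real_smul (r : ℝ) (z : ℂ) (b c : ℕ) : g ((r : ℂ) * z) b c = r * g z b c := by
  unfold g; split_ifs <;> simp <;> ring

lemma cmx_real_smul {k : ℕ} (r : ℝ) (A : Matrix (Fin k) (Fin k) ℂ) :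
    cmx k (((r : ℂ)) • A) = r • cmx k A := by
  ext i j
  rw [Matrix.smul_apply, cmx_apply, cmx_apply, Matrix.smul_apply, smul_eq_mul,
    g_real_smul, smul_eq_mul]

lemma Gmat_split (k : ℕ) (φ : ℝ) :
    Gmat (2 * k) (fun _ => φ) =
      Real.cos φ • (1 : Matrix (Fin (2 * k)) (Fin (2 * k)) ℝ) + Real.sin φ • Jmat k := by
  rw [Gmat_eq, Jmat_eq]
  have h1 : (Complex.exp ((φ : ℂ) * Complex.I)) • (1 : Matrix (Fin k) (Fin k) ℂ) =
      ((Real.cos φ : ℝ) : ℂ) • (1 : Matrix (Fin k) (Fin k) ℂ) +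
        ((Real.sin φ : ℝ) : ℂ) • (Complex.I • (1 : Matrix (Fin k) (Fin k) ℂ)) := by
    rw [Complex.exp_mul_I, smul_smul, ← Complex.ofReal_cos, ← Complex.ofReal_sin, add_smul]
  rw [h1, cmx_add, cmx_real_smul, cmx_real_smul, cmx_one]


lemma pe_val0 {k : ℕ} (a : Fin k) : (pe k (a, 0)).val = 2 * a.val := by
  show 2 * a.val + (0 : Fin 2).val = 2 * a.val
  simp

lemma pe_val1 {k : ℕ} (a : Fin k) : (pe k (a, 1)).val = 2 * a.val + 1 := by
  show 2 * a.val + (1 : Fin 2).val = 2 * a.val + 1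
  simp

lemma mul_J_even' {k : ℕ} (X : Matrix (Fin (2 * k)) (Fin (2 * k)) ℝ) (i : Fin (2 * k))
    (c : Fin k) : (X * Jmat k) i (pe k (c, 0)) = X i (pe k (c, 1)) := by
  rw [Matrix.mul_apply, Finset.sum_eq_single (pe k (c, 1))]
  · simp only [Jmat, Matrix.of_apply]
    rw [pe_val0, pe_val1, if_pos ⟨rfl, by omega⟩, mul_one]
  · intro l _ hl
    have hlv : l.val ≠ 2 * c.val + 1 := fun h => hl (Fin.ext (h.trans (pe_val1 c).symm))
    simp only [Jmat, Matrix.of_apply]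
    rw [pe_val0, if_neg (fun h => by omega), if_neg (fun h => by omega), mul_zero]
  · intro h; exact absurd (Finset.mem_univ _) h

lemma mul_J_odd' {k : ℕ} (X : Matrix (Fin (2 * k)) (Fin (2 * k)) ℝ) (i : Fin (2 * k))
    (c : Fin k) : (X * Jmat k) i (pe k (c, 1)) = -(X i (pe k (c, 0))) := by
  rw [Matrix.mul_apply, Finset.sum_eq_single (pe k (c, 0))]
  · simp only [Jmat, Matrix.of_apply]
    rw [pe_val0, pe_val1, if_neg (fun h => by omega), if_pos ⟨rfl, by omega⟩, mul_neg_one]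
  · intro l _ hl
    have hlv : l.val ≠ 2 * c.val := fun h => hl (Fin.ext (h.trans (pe_val0 c).symm))
    simp only [Jmat, Matrix.of_apply]
    rw [pe_val1, if_neg (fun h => by omega), if_neg (fun h => by omega), mul_zero]
  · intro h; exact absurd (Finset.mem_univ _) h

lemma J_mul_even' {k : ℕ} (X : Matrix (Fin (2 * k)) (Fin (2 * k)) ℝ) (a : Fin k)
    (j : Fin (2 * k)) : (Jmat k * X) (pe k (a, 0)) j = -(X (pe k (a, 1)) j) := by
  rw [Matrix.mul_apply, Finset.sum_eq_single (pe k (a, 1))]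
  · simp only [Jmat, Matrix.of_apply]
    rw [pe_val0, pe_val1, if_neg (fun h => by omega), if_pos ⟨rfl, by omega⟩, neg_one_mul]
  · intro l _ hl
    have hlv : l.val ≠ 2 * a.val + 1 := fun h => hl (Fin.ext (h.trans (pe_val1 a).symm))
    simp only [Jmat, Matrix.of_apply]
    rw [pe_val0, if_neg (fun h => by omega), if_neg (fun h => by omega), zero_mul]
  · intro h; exact absurd (Finset.mem_univ _) h

lemma J_mul_odd' {k : ℕ} (X : Matrix (Fin (2 * k)) (Fin (2 * k)) ℝ) (a : Fin k)
    (j : Fin (2 * k)) : (Jmat k * X) (pe k (a, 1)) j = X (pe k (a, 0)) j := by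
  rw [Matrix.mul_apply, Finset.sum_eq_single (pe k (a, 0))]
  · simp only [Jmat, Matrix.of_apply]
    rw [pe_val0, pe_val1, if_pos ⟨rfl, by omega⟩, one_mul]
  · intro l _ hl
    have hlv : l.val ≠ 2 * a.val := fun h => hl (Fin.ext (h.trans (pe_val0 a).symm))
    simp only [Jmat, Matrix.of_apply]
    rw [pe_val1, if_neg (fun h => by omega), if_neg (fun h => by omega), zero_mul]
  · intro h; exact absurd (Finset.mem_univ _) h

lemma exists_cmx {k : ℕ} (X : Matrix (Fin (2 * k)) (Fin (2 * k)) ℝ)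
    (h : X * Jmat k = Jmat k * X) : ∃ A, cmx k A = X := by
  have R1 : ∀ (a c : Fin k), X (pe k (a, 0)) (pe k (c, 1)) = -X (pe k (a, 1)) (pe k (c, 0)) := by
    intro a c
    have h0 := congrFun (congrFun h (pe k (a, 0))) (pe k (c, 0))
    rwa [mul_J_even', J_mul_even'] at h0
  have R2 : ∀ (a c : Fin k), X (pe k (a, 1)) (pe k (c, 1)) = X (pe k (a, 0)) (pe k (c, 0)) := by
    intro a c
    have h0 := congrFun (congrFun h (pe k (a, 1))) (pe k (c, 0))
    rwa [mul_J_even', J_mul_odd'] at h0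
  refine ⟨Matrix.of fun a c => ⟨X (pe k (a, 0)) (pe k (c, 0)), X (pe k (a, 1)) (pe k (c, 0))⟩, ?_⟩
  ext i j
  have hi := i.isLt; have hj := j.isLt
  set a : Fin k := ⟨i.val / 2, by omega⟩ with ha
  set c : Fin k := ⟨j.val / 2, by omega⟩ with hc
  rcases Nat.mod_two_eq_zero_or_one i.val with h1 | h1 <;>
    rcases Nat.mod_two_eq_zero_or_one j.val with h2 | h2
  · have ei : i = pe k (a, 0) := Fin.ext (by rw [pe_val0]; show i.val = 2 * (i.val / 2); omega)
    have ej : j = pe k (c, 0) := Fin.ext (by rw [pe_val0]; show j.val = 2 * (j.val / 2); omega)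
    rw [ei, ej, cmx_pe_pe]
    norm_num [g]
  · have ei : i = pe k (a, 0) := Fin.ext (by rw [pe_val0]; show i.val = 2 * (i.val / 2); omega)
    have ej : j = pe k (c, 1) := Fin.ext
      (by rw [pe_val1]; show j.val = 2 * (j.val / 2) + 1; omega)
    rw [ei, ej, cmx_pe_pe, R1]
    norm_num [g]
  · have ei : i = pe k (a, 1) := Fin.ext
      (by rw [pe_val1]; show i.val = 2 * (i.val / 2) + 1; omega)
    have ej : j = pe k (c, 0) := Fin.ext (by rw [pe_val0]; show j.val = 2 * (j.val / 2); omega)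
    rw [ei, ej, cmx_pe_pe]
    norm_num [g]
  · have ei : i = pe k (a, 1) := Fin.ext
      (by rw [pe_val1]; show i.val = 2 * (i.val / 2) + 1; omega)
    have ej : j = pe k (c, 1) := Fin.ext
      (by rw [pe_val1]; show j.val = 2 * (j.val / 2) + 1; omega)
    rw [ei, ej, cmx_pe_pe, R2]
    norm_num [g]


lemma smul_one_eq_diagonal' {k : ℕ} (c : ℂ) :
    c • (1 : Matrix (Fin k) (Fin k) ℂ) = Matrix.diagonal (fun _ => c) := by
  ext i j
  by_cases h : i = j <;>
    simp [Matrix.smul_apply, Matrix.one_apply, Matrix.diagonal_apply, h]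

lemma exp_omat {k : ℕ} (φ : ℝ) (v : Fin k → ℝ)
    (hv : ∀ a, ∃ n : ℤ, v a = φ + 2 * Real.pi * n) :
    NormedSpace.exp (cmx k (Matrix.diagonal fun a => ((v a : ℝ) : ℂ) * Complex.I)) =
      Gmat (2 * k) (fun _ => φ) := by
  rw [← cmx_exp, Matrix.exp_diagonal, Gmat_eq]
  congr 1
  have : (NormedSpace.exp fun a => ((v a : ℝ) : ℂ) * Complex.I) =
      fun _ => Complex.exp ((φ : ℂ) * Complex.I) := by
    rw [Pi.exp_def]
    funext a
    rw [← Complex.exp_eq_exp_ℂ]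
    obtain ⟨n, hn⟩ := hv a
    rw [hn]
    push_cast
    rw [show ((φ : ℂ) + 2 * (Real.pi : ℂ) * (n : ℂ)) * Complex.I =
      (φ : ℂ) * Complex.I + (n : ℂ) * (2 * (Real.pi : ℂ) * Complex.I) by ring,
      Complex.exp_add, Complex.exp_int_mul_two_pi_mul_I, mul_one]
  rw [this, smul_one_eq_diagonal']

end ExpmAux

/-- The matrix exponential inverse of `G_{2k}(φ·I_k)` for `φ ∈ (−π,π) \ {0}`: a skew-symmetric
`2k×2k` matrix `Ω` satisfies `exp_m(Ω) = G_{2k}(φ·I_k)` iff `Ω = M·Ω_{2k}(φ·I_k,K)·Mᵀ` for some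
diagonal integer matrix `K` and some `J_{2k}`-orthosymplectic matrix `M`. -/
theorem expm_inv_Gmat_scalar (k : ℕ) (hk : 0 < k) (φ : ℝ)
    (hφl : -Real.pi < φ) (hφu : φ < Real.pi) (hφ0 : φ ≠ 0)
    (Ω : Matrix (Fin (2 * k)) (Fin (2 * k)) ℝ) (hΩ : Ωᵀ = -Ω) :
    mexp Ω = Gmat (2 * k) (fun _ => φ) ↔
      ∃ (K : Fin (2 * k / 2) → ℤ) (M : Matrix (Fin (2 * k)) (Fin (2 * k)) ℝ),
        Mᵀ * M = 1 ∧ M * Jmat k * Mᵀ = Jmat k ∧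
        Ω = M * Omat (2 * k) (fun _ => φ) K * Mᵀ := by
  open ExpmAux in
  constructor
  · intro hexp
    have hsin : Real.sin φ ≠ 0 := fun h =>
      hφ0 ((Real.sin_eq_zero_iff_of_lt_of_lt hφl hφu).1 h)
    have hcomm0 : Ω * mexp Ω = mexp Ω * Ω := by
      unfold mexp
      letI : SeminormedRing (Matrix (Fin (2 * k)) (Fin (2 * k)) ℝ) :=
        Matrix.linftyOpSemiNormedRing
      letI : NormedRing (Matrix (Fin (2 * k)) (Fin (2 * k)) ℝ) := Matrix.linftyOpNormedRing
      letI : NormedAlgebra ℝ (Matrix (Fin (2 * k)) (Fin (2 * k)) ℝ) :=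
        Matrix.linftyOpNormedAlgebra
      exact ((Commute.refl Ω).exp_right)
    have hcommJ : Ω * Jmat k = Jmat k * Ω := by
      have h1 : Ω * (Real.cos φ • 1 + Real.sin φ • Jmat k) =
          (Real.cos φ • 1 + Real.sin φ • Jmat k) * Ω := by
        rw [← Gmat_split, ← hexp]; exact hcomm0
      rw [Matrix.mul_add, Matrix.add_mul, Matrix.mul_smul, Matrix.smul_mul, Matrix.mul_smul,
        Matrix.smul_mul, Matrix.mul_one, Matrix.one_mul] at h1
      have h2 := add_left_cancel h1
      exact smul_right_injective _ hsin h2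
    obtain ⟨A, hA⟩ := exists_cmx Ω hcommJ
    have hskew : Aᴴ = -A := by
      apply cmx_injective
      rw [cmx_conjTranspose, hA, hΩ, show cmx k (-A) = -cmx k A from map_neg (cmxHom k) A, hA]
    have hH : ((-Complex.I) • A).IsHermitian := by
      show ((-Complex.I) • A)ᴴ = (-Complex.I) • A
      rw [Matrix.conjTranspose_smul, hskew]
      simp
    set θ := hH.eigenvalues with hθ
    set U : Matrix (Fin k) (Fin k) ℂ := (hH.eigenvectorUnitary : Matrix (Fin k) (Fin k) ℂ)
      with hU
    have hU1 : U * star U = 1 := (Matrix.mem_unitaryGroup_iff).mp hH.eigenvectorUnitary.2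
    have hU2 : star U * U = 1 := (Matrix.mem_unitaryGroup_iff').mp hH.eigenvectorUnitary.2
    have hUunit : IsUnit U := (Matrix.isUnit_iff_isUnit_det _).mpr (Matrix.isUnit_det_of_right_inverse hU1)
    have hUinv : U⁻¹ = star U := Matrix.inv_eq_right_inv hU1
    have hdiag : Matrix.diagonal (fun a => ((θ a : ℝ) : ℂ) * Complex.I) =
        Complex.I • Matrix.diagonal (RCLike.ofReal ∘ θ) := by
      ext i j
      by_cases h : i = j <;>
        simp [Matrix.diagonal_apply, Matrix.smul_apply, h, mul_comm]
    have hAeq : A = U * Matrix.diagonal (fun a => ((θ a : ℝ) : ℂ) * Complex.I) * star U := by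
      have h3 : A = Complex.I • ((-Complex.I) • A) := by
        rw [smul_smul]; simp
      rw [h3, hH.spectral_theorem, Unitary.conjStarAlgAut_apply, hdiag, Matrix.mul_smul, Matrix.smul_mul]
    have hexpA : NormedSpace.exp A = Complex.exp ((φ : ℂ) * Complex.I) • 1 := by
      apply cmx_injective
      calc cmx k (NormedSpace.exp A) = NormedSpace.exp (cmx k A) := cmx_exp A
        _ = mexp Ω := by rw [hA]; rfl
        _ = Gmat (2 * k) (fun _ => φ) := hexp
        _ = cmx k (Complex.exp ((φ : ℂ) * Complex.I) • 1) := Gmat_eq k φ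
    have hexpA2 : NormedSpace.exp A =
        U * Matrix.diagonal (fun a => Complex.exp (((θ a : ℝ) : ℂ) * Complex.I)) * star U := by
      rw [hAeq, ← hUinv, Matrix.exp_conj U _ hUunit, Matrix.exp_diagonal, hUinv]
      congr 2
      rw [Pi.exp_def]
      funext a
      rw [← Complex.exp_eq_exp_ℂ]
    have hdiageq : ∀ a : Fin k,
        Complex.exp (((θ a : ℝ) : ℂ) * Complex.I) = Complex.exp ((φ : ℂ) * Complex.I) := by
      have h6 : U * Matrix.diagonal (fun a => Complex.exp (((θ a : ℝ) : ℂ) * Complex.I)) *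
          star U = Complex.exp ((φ : ℂ) * Complex.I) • 1 := hexpA2.symm.trans hexpA
      have h8 : Matrix.diagonal (fun a => Complex.exp (((θ a : ℝ) : ℂ) * Complex.I)) =
          Complex.exp ((φ : ℂ) * Complex.I) • 1 := by
        calc Matrix.diagonal (fun a => Complex.exp (((θ a : ℝ) : ℂ) * Complex.I))
            = (star U * U) * Matrix.diagonal (fun a => Complex.exp (((θ a : ℝ) : ℂ) *
              Complex.I)) * (star U * U) := by rw [hU2, one_mul, mul_one]
          _ = star U * (U * Matrix.diagonal (fun a => Complex.exp (((θ a : ℝ) : ℂ) *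
              Complex.I)) * star U) * U := by simp only [mul_assoc]
          _ = star U * (Complex.exp ((φ : ℂ) * Complex.I) • 1) * U := by rw [h6]
          _ = Complex.exp ((φ : ℂ) * Complex.I) • 1 := by
              rw [Matrix.mul_smul, Matrix.mul_one, Matrix.smul_mul, hU2]
      intro a
      have h9 := congrFun (congrFun h8 a) a
      simpa [Matrix.diagonal_apply_eq, Matrix.smul_apply, Matrix.one_apply] using h9
    have hKex : ∀ a : Fin k, ∃ n : ℤ, θ a = φ + 2 * Real.pi * n := by
      intro a
      obtain ⟨n, hn⟩ := Complex.exp_eq_exp_iff_exists_int.1 (hdiageq a)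
      refine ⟨n, ?_⟩
      have h10 := congrArg Complex.im hn
      simp [Complex.add_im, Complex.mul_im, Complex.mul_re] at h10
      ring_nf at h10 ⊢
      linarith
    choose Kf hKf using hKex
    refine ⟨fun a => Kf ⟨a.val, by have := a.isLt; omega⟩, cmx k U, ?_, ?_, ?_⟩
    · rw [← cmx_conjTranspose, ← cmx_mul,
        show Uᴴ * U = 1 by rw [← Matrix.star_eq_conjTranspose]; exact hU2, cmx_one]
    · rw [Jmat_eq, ← cmx_conjTranspose, ← cmx_mul, ← cmx_mul]
      congr 1
      rw [Matrix.mul_smul, Matrix.mul_one, ← Matrix.star_eq_conjTranspose, Matrix.smul_mul, hU1]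
    · rw [Omat_eq, ← cmx_conjTranspose, ← cmx_mul, ← cmx_mul, ← hA]
      apply congrArg (cmx k)
      rw [hAeq, ← Matrix.star_eq_conjTranspose]
      have hdd : (Matrix.diagonal fun a : Fin k =>
          ((φ + 2 * Real.pi * ((Kf a : ℤ) : ℝ) : ℝ) : ℂ) * Complex.I) =
          Matrix.diagonal fun a : Fin k => ((θ a : ℝ) : ℂ) * Complex.I := by
        ext a b
        by_cases h : a = b <;> simp [Matrix.diagonal_apply, h, hKf]
      show U * Matrix.diagonal (fun a : Fin k => ((θ a : ℝ) : ℂ) * Complex.I) * star U =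
        U * (Matrix.diagonal fun a : Fin k =>
          ((φ + 2 * Real.pi * ((Kf a : ℤ) : ℝ) : ℝ) : ℂ) * Complex.I) * star U
      rw [hdd]
  · rintro ⟨K, M, hM1, hMJ, hΩeq⟩
    have hMMt : M * Mᵀ = 1 := mul_eq_one_comm.mp hM1
    have hMinv : M⁻¹ = Mᵀ := Matrix.inv_eq_right_inv hMMt
    have hMunit : IsUnit M := (Matrix.isUnit_iff_isUnit_det _).mpr (Matrix.isUnit_det_of_right_inverse hMMt)
    rw [hΩeq]
    unfold mexp
    rw [← hMinv, Matrix.exp_conj M _ hMunit, hMinv]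
    rw [Omat_eq k φ K, exp_omat φ _ (fun a => ⟨K ⟨a.val, by have := a.isLt; omega⟩, rfl⟩)]
    rw [Gmat_split, Matrix.mul_add, Matrix.add_mul, Matrix.mul_smul, Matrix.smul_mul,
      Matrix.mul_smul, Matrix.smul_mul, Matrix.mul_one, hMMt, hMJ]
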